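/- Let G be a connected simple graph on n ≥ 11 vertices with independence number α(G) ≤ 2. Then λ₂(D(G)) < t(G), where t(G) is the number of triangles in G. -/

import Mathlib

open Finset SimpleGraph

/-- The distance matrix of a simple graph on `Fin n`, as a real matrix: the
`(i,j)` entry is the graph distance `d_G(i,j)`. -/
noncomputable def distMatrix {n : ℕ} (G : SimpleGraph (Fin n)) :
    Matrix (Fin n) (Fin n) ℝ :=
  fun i j => (G.dist i j : ℝ)

/-- The eigenvalues of the distance matrix, listed in decreasing order. -/
noncomputable def distEigList {n : ℕ} (G : SimpleGraph (Fin n)) : List ℝ :=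
  if h : (distMatrix G).IsHermitian then
    (List.ofFn h.eigenvalues).insertionSort (· ≥ ·)
  else []

/-- `distEig G k` is the `k`-th largest distance eigenvalue `λ_k(D(G))` (`1`-indexed). -/
noncomputable def distEig {n : ℕ} (G : SimpleGraph (Fin n)) (k : ℕ) : ℝ :=
  (distEigList G).getD (k - 1) 0

/-- `S_k(D(G))`, the sum of the `k` largest distance eigenvalues. -/
noncomputable def distEigSum {n : ℕ} (G : SimpleGraph (Fin n)) (k : ℕ) : ℝ :=
  ((distEigList G).take k).sum

/-- `G` has independence number at most `s`: every set of pairwise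
nonadjacent vertices has at most `s` elements. -/
def IndepNumLE {V : Type*} (G : SimpleGraph V) (s : ℕ) : Prop :=
  ∀ S : Finset V, (∀ u ∈ S, ∀ v ∈ S, u ≠ v → ¬ G.Adj u v) → S.card ≤ s

open Matrix

lemma indep3 {n : ℕ} {G : SimpleGraph (Fin n)} (hα : IndepNumLE G 2)
    {u v w : Fin n} (huv : u ≠ v) (huw : u ≠ w) (hvw : v ≠ w) :
    G.Adj u v ∨ G.Adj u w ∨ G.Adj v w := by
  by_contra h
  push_neg at h
  obtain ⟨h1, h2, h3⟩ := h
  have := hα {u, v, w} ?_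
  · have hc : ({u, v, w} : Finset (Fin n)).card = 3 := by
      rw [Finset.card_insert_of_notMem (by simp [huv, huw]),
        Finset.card_insert_of_notMem (by simp [hvw])]
      simp
    omega
  · intro a ha b hb hab
    simp only [Finset.mem_insert, Finset.mem_singleton] at ha hb
    rcases ha with rfl | rfl | rfl <;> rcases hb with rfl | rfl | rfl <;>
      first
      | exact absurd rfl hab
      | assumption
      | (intro hadj; exact (by assumption : ¬ G.Adj _ _) hadj.symm)

lemma aux_dist_le_three {n : ℕ} {G : SimpleGraph (Fin n)} (hG : G.Connected)
    (hα : IndepNumLE G 2) (u v : Fin n) : G.dist u v ≤ 3 := by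
  by_contra hd
  push_neg at hd
  obtain ⟨p, hp⟩ := hG.exists_walk_length_eq_dist u v
  cases p with
  | nil => rw [SimpleGraph.dist_self] at hd; omega
  | cons h1 p =>
    rename_i x1
    cases p with
    | nil => simp at hp; omega
    | cons h2 p =>
      rename_i x2
      cases p with
      | nil => simp at hp; omega
      | cons h3 p =>
        rename_i x3
        cases p with
        | nil => simp at hp; omega
        | cons h4 q =>
          rename_i x4
          simp only [SimpleGraph.Walk.length_cons] at hp
          have hu2 : u ≠ x2 := by
            rintro rfl
            have := G.dist_le (SimpleGraph.Walk.cons h3 (SimpleGraph.Walk.cons h4 q))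
            simp only [SimpleGraph.Walk.length_cons] at this
            omega
          have hu4 : u ≠ x4 := by
            rintro rfl
            have := G.dist_le q
            omega
          have h24 : x2 ≠ x4 := by
            rintro rfl
            have := G.dist_le (SimpleGraph.Walk.cons h1 (SimpleGraph.Walk.cons h2 q))
            simp only [SimpleGraph.Walk.length_cons] at this
            omega
          rcases indep3 hα hu2 hu4 h24 with hadj | hadj | hadj
          · have := G.dist_le (SimpleGraph.Walk.cons hadj
              (SimpleGraph.Walk.cons h3 (SimpleGraph.Walk.cons h4 q)))
            simp only [SimpleGraph.Walk.length_cons] at this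
            omega
          · have := G.dist_le (SimpleGraph.Walk.cons hadj q)
            simp only [SimpleGraph.Walk.length_cons] at this
            omega
          · have := G.dist_le (SimpleGraph.Walk.cons h1 (SimpleGraph.Walk.cons h2
              (SimpleGraph.Walk.cons hadj q)))
            simp only [SimpleGraph.Walk.length_cons] at this
            omega

lemma six_set_triangle {n : ℕ} {G : SimpleGraph (Fin n)} [DecidableRel G.Adj]
    (hα : IndepNumLE G 2) (s : Finset (Fin n)) (hs : s.card = 6) :
    ∃ T ∈ G.cliqueFinset 3, T ⊆ s := by
  obtain ⟨v, hv⟩ : s.Nonempty := by rw [← Finset.card_pos]; omega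
  set s' := s.erase v with hs'
  have hcard : s'.card = 5 := by rw [hs', Finset.card_erase_of_mem hv]; omega
  have hsplit := Finset.card_filter_add_card_filter_not
    (s := s') (p := fun x => G.Adj v x)
  by_cases hB : 3 ≤ (s'.filter (fun x => ¬ G.Adj v x)).card
  · obtain ⟨t, ht, htc⟩ := Finset.exists_subset_card_eq hB
    obtain ⟨x, y, z, hxy, hxz, hyz, rfl⟩ := Finset.card_eq_three.mp htc
    have hx := ht (show x ∈ ({x, y, z} : Finset (Fin n)) by simp)
    have hy := ht (show y ∈ ({x, y, z} : Finset (Fin n)) by simp)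
    have hz := ht (show z ∈ ({x, y, z} : Finset (Fin n)) by simp)
    simp only [hs', Finset.mem_filter, Finset.mem_erase] at hx hy hz
    have adjxy : G.Adj x y := by
      rcases indep3 hα (Ne.symm hx.1.1) (Ne.symm hy.1.1) hxy with h | h | h
      · exact absurd h hx.2
      · exact absurd h hy.2
      · exact h
    have adjxz : G.Adj x z := by
      rcases indep3 hα (Ne.symm hx.1.1) (Ne.symm hz.1.1) hxz with h | h | h
      · exact absurd h hx.2
      · exact absurd h hz.2
      · exact h
    have adjyz : G.Adj y z := by
      rcases indep3 hα (Ne.symm hy.1.1) (Ne.symm hz.1.1) hyz with h | h | h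
      · exact absurd h hy.2
      · exact absurd h hz.2
      · exact h
    refine ⟨{x, y, z}, ?_, ?_⟩
    · rw [SimpleGraph.mem_cliqueFinset_iff, SimpleGraph.is3Clique_triple_iff]
      exact ⟨adjxy, adjxz, adjyz⟩
    · intro a ha
      simp only [Finset.mem_insert, Finset.mem_singleton] at ha
      rcases ha with rfl | rfl | rfl
      · exact hx.1.2
      · exact hy.1.2
      · exact hz.1.2
  · have hA : 3 ≤ (s'.filter (fun x => G.Adj v x)).card := by omega
    obtain ⟨t, ht, htc⟩ := Finset.exists_subset_card_eq hA
    obtain ⟨x, y, z, hxy, hxz, hyz, rfl⟩ := Finset.card_eq_three.mp htc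
    have hx := ht (show x ∈ ({x, y, z} : Finset (Fin n)) by simp)
    have hy := ht (show y ∈ ({x, y, z} : Finset (Fin n)) by simp)
    have hz := ht (show z ∈ ({x, y, z} : Finset (Fin n)) by simp)
    simp only [hs', Finset.mem_filter, Finset.mem_erase] at hx hy hz
    have hxs := hx.1.2
    have hys := hy.1.2
    have hzs := hz.1.2
    rcases indep3 hα hxy hxz hyz with h | h | h
    · refine ⟨{v, x, y}, ?_, ?_⟩
      · rw [SimpleGraph.mem_cliqueFinset_iff, SimpleGraph.is3Clique_triple_iff]
        exact ⟨hx.2, hy.2, h⟩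
      · intro a ha
        simp only [Finset.mem_insert, Finset.mem_singleton] at ha
        rcases ha with rfl | rfl | rfl <;> assumption
    · refine ⟨{v, x, z}, ?_, ?_⟩
      · rw [SimpleGraph.mem_cliqueFinset_iff, SimpleGraph.is3Clique_triple_iff]
        exact ⟨hx.2, hz.2, h⟩
      · intro a ha
        simp only [Finset.mem_insert, Finset.mem_singleton] at ha
        rcases ha with rfl | rfl | rfl <;> assumption
    · refine ⟨{v, y, z}, ?_, ?_⟩
      · rw [SimpleGraph.mem_cliqueFinset_iff, SimpleGraph.is3Clique_triple_iff]
        exact ⟨hy.2, hz.2, h⟩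
      · intro a ha
        simp only [Finset.mem_insert, Finset.mem_singleton] at ha
        rcases ha with rfl | rfl | rfl <;> assumption

lemma triangle_count {n : ℕ} (hn : 11 ≤ n) {G : SimpleGraph (Fin n)}
    [DecidableRel G.Adj] (hα : IndepNumLE G 2) :
    n - 2 ≤ (G.cliqueFinset 3).card := by
  classical
  set F := Finset.powersetCard 6 (Finset.univ : Finset (Fin n)) with hF
  set tri := G.cliqueFinset 3 with htri
  have hFcard : F.card = n.choose 6 := by
    rw [hF, Finset.card_powersetCard, Finset.card_univ, Fintype.card_fin]
  -- each 6-set contains a triangle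
  have hone : ∀ s ∈ F, 1 ≤ (tri.filter (fun T => T ⊆ s)).card := by
    intro s hsF
    rw [hF, Finset.mem_powersetCard] at hsF
    obtain ⟨T, hT, hTs⟩ := six_set_triangle hα s hsF.2
    exact Finset.card_pos.mpr ⟨T, Finset.mem_filter.mpr ⟨hT, hTs⟩⟩
  -- each triangle is in at most (n-3).choose 3 six-sets
  have hfew : ∀ T ∈ tri, (F.filter (fun s => T ⊆ s)).card ≤ (n - 3).choose 3 := by
    intro T hT
    have hTcard : T.card = 3 := (SimpleGraph.mem_cliqueFinset_iff.mp hT).card_eq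
    have : (F.filter (fun s => T ⊆ s)).card ≤
        (Finset.powersetCard 3 ((Finset.univ : Finset (Fin n)) \ T)).card := by
      apply Finset.card_le_card_of_injOn (fun s => s \ T)
      · intro s hsmem
        rw [Finset.mem_coe, Finset.mem_filter, hF, Finset.mem_powersetCard] at hsmem
        rw [Finset.mem_coe, Finset.mem_powersetCard]
        refine ⟨Finset.sdiff_subset_sdiff hsmem.1.1 le_rfl, ?_⟩
        rw [Finset.card_sdiff_of_subset hsmem.2, hsmem.1.2, hTcard]
      · intro s1 h1 s2 h2 heq
        rw [Finset.mem_coe, Finset.mem_filter] at h1 h2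
        have e1 := Finset.sdiff_union_of_subset h1.2
        have e2 := Finset.sdiff_union_of_subset h2.2
        dsimp only at heq
        rw [← e1, ← e2, heq]
    rwa [Finset.card_powersetCard, Finset.card_sdiff_of_subset (Finset.subset_univ T),
      Finset.card_univ, Fintype.card_fin, hTcard] at this
  -- double counting
  have key : n.choose 6 ≤ tri.card * (n - 3).choose 3 := by
    calc n.choose 6 = ∑ s ∈ F, 1 := by rw [Finset.sum_const, smul_eq_mul, mul_one, hFcard]
    _ ≤ ∑ s ∈ F, (tri.filter (fun T => T ⊆ s)).card := Finset.sum_le_sum hone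
    _ = ∑ s ∈ F, ∑ T ∈ tri, if T ⊆ s then 1 else 0 := by
        refine Finset.sum_congr rfl fun s _ => ?_
        rw [Finset.card_filter]
    _ = ∑ T ∈ tri, ∑ s ∈ F, if T ⊆ s then 1 else 0 := Finset.sum_comm
    _ = ∑ T ∈ tri, (F.filter (fun s => T ⊆ s)).card := by
        refine Finset.sum_congr rfl fun T _ => ?_
        rw [Finset.card_filter]
    _ ≤ ∑ T ∈ tri, (n - 3).choose 3 := Finset.sum_le_sum hfew
    _ = tri.card * (n - 3).choose 3 := by rw [Finset.sum_const, smul_eq_mul]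
  -- arithmetic
  by_contra hcon
  push_neg at hcon
  have htle : tri.card ≤ n - 3 := by omega
  obtain ⟨m, rfl⟩ : ∃ m, n = m + 11 := ⟨n - 11, by omega⟩
  have hd6 : (720 : ℕ) * (m + 11).choose 6 = (m + 11).descFactorial 6 := by
    rw [Nat.descFactorial_eq_factorial_mul_choose]
    norm_num [Nat.factorial]
  have hd3 : (6 : ℕ) * (m + 8).choose 3 = (m + 8).descFactorial 3 := by
    rw [Nat.descFactorial_eq_factorial_mul_choose]
    norm_num [Nat.factorial]
  have hid : (m + 11).descFactorial 6 =
      (m + 11) * (m + 10) * (m + 9) * (m + 8).descFactorial 3 := by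
    have e1 : m + 11 - 1 = m + 10 := by omega
    have e2 : m + 11 - 2 = m + 9 := by omega
    have e3 : m + 11 - 3 = m + 8 := by omega
    have e4 : m + 11 - 4 = m + 7 := by omega
    have e5 : m + 11 - 5 = m + 6 := by omega
    have f1 : m + 8 - 1 = m + 7 := by omega
    have f2 : m + 8 - 2 = m + 6 := by omega
    simp only [Nat.descFactorial_succ, Nat.descFactorial_zero, e1, e2, e3, e4, e5, f1, f2,
      Nat.sub_zero]
    ring
  have key2 : 720 * (m + 11).choose 6 ≤ 720 * (tri.card * (m + 8).choose 3) :=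
    Nat.mul_le_mul_left _ key
  rw [hd6, hid] at key2
  have hexp : 720 * (tri.card * (m + 8).choose 3) =
      tri.card * 120 * (6 * (m + 8).choose 3) := by ring
  rw [hexp, hd3] at key2
  have hpos : 0 < (m + 8).descFactorial 3 := by
    rw [← hd3]
    have : 0 < (m + 8).choose 3 := Nat.choose_pos (by omega)
    omega
  have htle' : tri.card ≤ m + 8 := by omega
  have hlt : tri.card * 120 < (m + 11) * (m + 10) * (m + 9) := by
    have hexp2 : (m + 11) * (m + 10) * (m + 9) = m^3 + 30*m^2 + 299*m + 990 := by ring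
    have h1 : tri.card * 120 ≤ (m + 8) * 120 := Nat.mul_le_mul_right _ htle'
    have h2 : (m + 8) * 120 < m^3 + 30*m^2 + 299*m + 990 := by
      have := Nat.zero_le (m^3 + 30*m^2)
      linarith
    omega
  nlinarith [Nat.mul_le_mul_right ((m + 8).descFactorial 3) (le_of_lt hlt)]

lemma quadform_bound {n : ℕ} (M : Matrix (Fin n) (Fin n) ℝ)
    (hdiag : ∀ i, M i i = 0) (hoff : ∀ i j : Fin n, i ≠ j → |M i j - 2| ≤ 1)
    (w : Fin n → ℝ) (hw : ∑ i, w i = 0) :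
    w ⬝ᵥ (M *ᵥ w) ≤ ((n : ℝ) - 3) * ∑ i, (w i)^2 := by
  have hQ : w ⬝ᵥ (M *ᵥ w) = ∑ i, ∑ j, M i j * w i * w j := by
    simp only [dotProduct, Matrix.mulVec, dotProduct, Finset.mul_sum]
    exact Finset.sum_congr rfl fun i _ => Finset.sum_congr rfl fun j _ => by ring
  have hsub : w ⬝ᵥ (M *ᵥ w) = ∑ i, ∑ j, (M i j - 2) * w i * w j := by
    rw [hQ]
    have h2 : ∑ i, ∑ j, (2 : ℝ) * w i * w j = 2 * ((∑ i, w i) * (∑ i, w i)) := by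
      rw [Finset.sum_mul_sum, Finset.mul_sum]
      refine Finset.sum_congr rfl fun i _ => ?_
      rw [Finset.mul_sum]
      exact Finset.sum_congr rfl fun j _ => by ring
    have h3 : ∑ i, ∑ j, (M i j - 2) * w i * w j
        = (∑ i, ∑ j, M i j * w i * w j) - ∑ i, ∑ j, (2:ℝ) * w i * w j := by
      rw [← Finset.sum_sub_distrib]
      refine Finset.sum_congr rfl fun i _ => ?_
      rw [← Finset.sum_sub_distrib]
      exact Finset.sum_congr rfl fun j _ => by ring
    rw [h3, h2, hw]
    ring
  rw [hsub]
  have hbound : ∑ i, ∑ j, (M i j - 2) * w i * w j ≤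
      ∑ i : Fin n, ∑ j : Fin n, (((w i)^2 + (w j)^2)/2 - if i = j then 3 * (w i)^2 else 0) := by
    refine Finset.sum_le_sum fun i _ => Finset.sum_le_sum fun j _ => ?_
    by_cases hij : i = j
    · subst hij
      simp [hdiag i]
      nlinarith [sq_nonneg (w i)]
    · simp only [hij, if_false, sub_zero]
      have h1 := hoff i j hij
      have h2 : (M i j - 2) * w i * w j ≤ |M i j - 2| * |w i| * |w j| := by
        calc (M i j - 2) * w i * w j ≤ |(M i j - 2) * w i * w j| := le_abs_self _
        _ = |M i j - 2| * |w i| * |w j| := by rw [abs_mul, abs_mul]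
      have h3 : |M i j - 2| * |w i| * |w j| ≤ |w i| * |w j| := by
        nlinarith [mul_nonneg (sub_nonneg.mpr h1)
          (mul_nonneg (abs_nonneg (w i)) (abs_nonneg (w j)))]
      have h4 : |w i| * |w j| ≤ ((w i)^2 + (w j)^2)/2 := by
        nlinarith [sq_nonneg (|w i| - |w j|), sq_abs (w i), sq_abs (w j)]
      linarith
  refine hbound.trans (le_of_eq ?_)
  have h1 : ∀ i : Fin n, ∑ j : Fin n, (((w i)^2 + (w j)^2)/2 - if i = j then 3*(w i)^2 else 0)
      = (n:ℝ) * (w i)^2/2 + (∑ j, (w j)^2)/2 - 3*(w i)^2 := by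
    intro i
    rw [Finset.sum_sub_distrib, Finset.sum_ite_eq]
    simp only [Finset.mem_univ, if_true]
    have e : ∑ j : Fin n, ((w i)^2 + (w j)^2)/2 = ∑ j : Fin n, ((w i)^2/2 + (w j)^2/2) :=
      Finset.sum_congr rfl fun j _ => by ring
    rw [e, Finset.sum_add_distrib, Finset.sum_const, Finset.card_univ, Fintype.card_fin,
      nsmul_eq_mul]
    have e2 : ∑ j : Fin n, (w j)^2/2 = (∑ j, (w j)^2)/2 := by rw [Finset.sum_div]
    rw [e2]
    ring
  rw [Finset.sum_congr rfl fun i _ => h1 i]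
  rw [Finset.sum_sub_distrib, Finset.sum_add_distrib,
    Finset.sum_const, Finset.card_univ, Fintype.card_fin, nsmul_eq_mul]
  have e3 : ∑ i : Fin n, (n:ℝ)*(w i)^2/2 = (n:ℝ) * (∑ i, (w i)^2)/2 := by
    rw [Finset.mul_sum, Finset.sum_div]
  have e4 : ∑ i : Fin n, 3*(w i)^2 = 3 * ∑ i, (w i)^2 := by rw [Finset.mul_sum]
  rw [e3, e4]
  ring

lemma eig_pair_bound {n : ℕ} (M : Matrix (Fin n) (Fin n) ℝ) (hM : M.IsHermitian)
    (hdiag : ∀ i, M i i = 0) (hoff : ∀ i j : Fin n, i ≠ j → |M i j - 2| ≤ 1)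
    {i j : Fin n} (hij : i ≠ j) :
    hM.eigenvalues i ≤ (n:ℝ) - 3 ∨ hM.eigenvalues j ≤ (n:ℝ) - 3 := by
  by_contra hcon
  push_neg at hcon
  obtain ⟨hμi, hμj⟩ := hcon
  set u : Fin n → ℝ := fun k => hM.eigenvectorBasis i k with hu
  set v : Fin n → ℝ := fun k => hM.eigenvectorBasis j k with hv
  have hinner : ∀ a b : Fin n,
      (∑ k, (hM.eigenvectorBasis a) k * (hM.eigenvectorBasis b) k)
        = if a = b then (1:ℝ) else 0 := by
    intro a b
    have h := orthonormal_iff_ite.mp hM.eigenvectorBasis.orthonormal a b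
    rw [PiLp.inner_apply] at h
    simpa [mul_comm] using h
  have huu : ∑ k, u k * u k = 1 := by rw [hu]; simpa using hinner i i
  have hvv : ∑ k, v k * v k = 1 := by rw [hv]; simpa using hinner j j
  have huv : ∑ k, u k * v k = 0 := by rw [hu, hv]; simpa [hij] using hinner i j
  have hMu : M *ᵥ u = fun k => hM.eigenvalues i * u k := by
    rw [hu]
    funext k
    have h := congrFun (hM.mulVec_eigenvectorBasis i) k
    simpa [Matrix.mulVec, dotProduct] using h
  have hMv : M *ᵥ v = fun k => hM.eigenvalues j * v k := by
    rw [hv]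
    funext k
    have h := congrFun (hM.mulVec_eigenvectorBasis j) k
    simpa [Matrix.mulVec, dotProduct] using h
  set c1 := ∑ k, u k with hc1
  set c2 := ∑ k, v k with hc2
  obtain ⟨a, b, hab0, habpos⟩ : ∃ a b : ℝ, a * c1 + b * c2 = 0 ∧ 0 < a^2 + b^2 := by
    by_cases hc : c1 = 0 ∧ c2 = 0
    · exact ⟨1, 0, by simp [hc.1, hc.2], by norm_num⟩
    · refine ⟨c2, -c1, by ring, ?_⟩
      rcases (not_and_or.mp hc) with h | h
      · have h1 : 0 < c1^2 := sq_pos_of_ne_zero h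
        nlinarith [sq_nonneg c2]
      · have h1 : 0 < c2^2 := sq_pos_of_ne_zero h
        nlinarith [sq_nonneg c1]
  set w : Fin n → ℝ := fun k => a * u k + b * v k with hwdef
  have hwsum : ∑ k, w k = 0 := by
    rw [hwdef]
    simp only []
    rw [Finset.sum_add_distrib, ← Finset.mul_sum, ← Finset.mul_sum, ← hc1, ← hc2]
    exact hab0
  have hMw : M *ᵥ w = fun k => a * (hM.eigenvalues i * u k) + b * (hM.eigenvalues j * v k) := by
    funext k
    have : (M *ᵥ w) k = a * (M *ᵥ u) k + b * (M *ᵥ v) k := by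
      simp only [Matrix.mulVec, dotProduct, hwdef]
      rw [Finset.mul_sum, Finset.mul_sum, ← Finset.sum_add_distrib]
      exact Finset.sum_congr rfl fun l _ => by ring
    rw [this, hMu, hMv]
  have hQval : w ⬝ᵥ (M *ᵥ w) = a^2 * hM.eigenvalues i + b^2 * hM.eigenvalues j := by
    rw [hMw]
    simp only [dotProduct, hwdef]
    have expand : ∀ k, (a * u k + b * v k) *
        (a * (hM.eigenvalues i * u k) + b * (hM.eigenvalues j * v k))
        = a^2 * hM.eigenvalues i * (u k * u k) + (a*b*hM.eigenvalues j) * (u k * v k)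
          + (a*b*hM.eigenvalues i) * (u k * v k) + b^2 * hM.eigenvalues j * (v k * v k) := by
      intro k; ring
    rw [Finset.sum_congr rfl fun k _ => expand k]
    rw [Finset.sum_add_distrib, Finset.sum_add_distrib, Finset.sum_add_distrib,
      ← Finset.mul_sum, ← Finset.mul_sum, ← Finset.mul_sum, ← Finset.mul_sum,
      huu, hvv, huv]
    ring
  have hwsq : ∑ k, (w k)^2 = a^2 + b^2 := by
    rw [hwdef]
    have expand : ∀ k, (a * u k + b * v k)^2
        = a^2 * (u k * u k) + (2*a*b) * (u k * v k) + b^2 * (v k * v k) := by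
      intro k; ring
    simp only []
    rw [Finset.sum_congr rfl fun k _ => expand k]
    rw [Finset.sum_add_distrib, Finset.sum_add_distrib,
      ← Finset.mul_sum, ← Finset.mul_sum, ← Finset.mul_sum, huu, hvv, huv]
    ring
  have hbound := quadform_bound M hdiag hoff w hwsum
  rw [hQval, hwsq] at hbound
  have hdist : ((n:ℝ) - 3) * (a^2 + b^2) = ((n:ℝ) - 3) * a^2 + ((n:ℝ) - 3) * b^2 := by ring
  rw [hdist] at hbound
  have hcase : 0 < a^2 ∨ 0 < b^2 := by
    by_contra hc
    push_neg at hc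
    nlinarith [sq_nonneg a, sq_nonneg b]
  rcases hcase with h | h
  · have h1 := mul_lt_mul_of_pos_left hμi h
    have h2 := mul_le_mul_of_nonneg_left hμj.le (sq_nonneg b)
    linarith
  · have h1 := mul_lt_mul_of_pos_left hμj h
    have h2 := mul_le_mul_of_nonneg_left hμi.le (sq_nonneg a)
    linarith

lemma distEig_two_le {n : ℕ} (hn : 11 ≤ n) (G : SimpleGraph (Fin n))
    (hG : G.Connected) (hα : IndepNumLE G 2) :
    distEig G 2 ≤ (n : ℝ) - 3 := by
  have hHerm : (distMatrix G).IsHermitian := by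
    show (distMatrix G)ᴴ = distMatrix G
    ext i j
    simp [distMatrix, Matrix.conjTranspose_apply, SimpleGraph.dist_comm]
  have hdiag : ∀ i, distMatrix G i i = 0 := by
    intro i; simp [distMatrix]
  have hoff : ∀ i j : Fin n, i ≠ j → |distMatrix G i j - 2| ≤ 1 := by
    intro i j hij
    have h1 : 1 ≤ G.dist i j := hG.pos_dist_of_ne hij
    have h3 : G.dist i j ≤ 3 := aux_dist_le_three hG hα i j
    have h1' : (1:ℝ) ≤ (G.dist i j : ℝ) := by exact_mod_cast h1
    have h3' : ((G.dist i j : ℝ)) ≤ 3 := by exact_mod_cast h3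
    rw [abs_le]
    constructor <;> simp [distMatrix] <;> linarith
  have hl : distEigList G = (List.ofFn hHerm.eigenvalues).insertionSort (· ≥ ·) := by
    rw [distEigList, dif_pos hHerm]
  have hlen : (distEigList G).length = n := by
    rw [hl, List.length_insertionSort, List.length_ofFn]
  obtain ⟨x, y, t, hxyt⟩ : ∃ x y t, distEigList G = x :: y :: t := by
    rcases hL : distEigList G with _ | ⟨x, L2⟩
    · rw [hL] at hlen; simp at hlen; omega
    · rcases L2 with _ | ⟨y, t⟩
      · rw [hL] at hlen; simp at hlen; omega
      · exact ⟨x, y, t, rfl⟩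
  have hval : distEig G 2 = y := by rw [distEig, hxyt]; rfl
  rw [hval]
  by_contra hy
  push_neg at hy
  have hsort : (distEigList G).Pairwise (· ≥ ·) := by
    rw [hl]; exact List.pairwise_insertionSort _ _
  have hx : (n:ℝ) - 3 < x := by
    rw [hxyt] at hsort
    have := (List.pairwise_cons.mp hsort).1 y (by simp)
    linarith
  set p : ℝ → Bool := fun z => decide ((n:ℝ) - 3 < z) with hp
  have hpx : p x = true := by rw [hp]; simpa using hx
  have hpy : p y = true := by rw [hp]; simpa using hy
  have hcount : 2 ≤ (distEigList G).countP p := by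
    rw [hxyt]
    simp [List.countP_cons, hpx, hpy]
  have hperm : List.Perm (distEigList G) (List.ofFn hHerm.eigenvalues) := by
    rw [hl]; exact List.perm_insertionSort _ _
  have hcount2 : 2 ≤ (List.ofFn hHerm.eigenvalues).countP p := by
    rw [← hperm.countP_eq]; exact hcount
  rw [List.ofFn_eq_map, List.countP_map] at hcount2
  set L' := (List.finRange n).filter (p ∘ hHerm.eigenvalues) with hL'
  have hlen2 : 2 ≤ L'.length := by
    rw [hL', ← List.countP_eq_length_filter]; exact hcount2
  have hnodup : L'.Nodup := (List.nodup_finRange n).filter _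
  obtain ⟨i, j, rest, hij⟩ : ∃ i j rest, L' = i :: j :: rest := by
    rcases hLL : L' with _ | ⟨i, M2⟩
    · rw [hLL] at hlen2; simp at hlen2
    · rcases M2 with _ | ⟨j, rest⟩
      · rw [hLL] at hlen2; simp at hlen2
      · exact ⟨i, j, rest, rfl⟩
  have hineq : i ≠ j := by
    rw [hij] at hnodup
    have := (List.nodup_cons.mp hnodup).1
    intro h; exact this (h ▸ by simp)
  have hi : (n:ℝ) - 3 < hHerm.eigenvalues i := by
    have : i ∈ L' := by rw [hij]; simp
    rw [hL', List.mem_filter] at this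
    simpa [hp] using this.2
  have hj : (n:ℝ) - 3 < hHerm.eigenvalues j := by
    have : j ∈ L' := by rw [hij]; simp
    rw [hL', List.mem_filter] at this
    simpa [hp] using this.2
  rcases eig_pair_bound (distMatrix G) hHerm hdiag hoff hineq with h | h
  · linarith
  · linarith

theorem second_largest_distance_eigenvalue_lt_triangle_count {n : ℕ}
    (hn : 11 ≤ n) (G : SimpleGraph (Fin n)) [DecidableRel G.Adj]
    (hG : G.Connected) (hα : IndepNumLE G 2) :
    distEig G 2 < ((G.cliqueFinset 3).card : ℝ) := by
  have h1 : distEig G 2 ≤ (n : ℝ) - 3 := distEig_two_le hn G hG hα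
  have h2 : n - 2 ≤ (G.cliqueFinset 3).card := triangle_count hn hα
  have h3 : ((n - 2 : ℕ) : ℝ) ≤ ((G.cliqueFinset 3).card : ℝ) := by exact_mod_cast h2
  have h4 : ((n - 2 : ℕ) : ℝ) = (n : ℝ) - 2 := by
    rw [Nat.cast_sub (by omega)]; norm_num
  linarith
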